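/- Let C be a self-dual Z/2kZ-code of length n with minimum Euclidean weight d_E(C) (the least Euclidean weight of a nonzero codeword). Then the minimum norm of the Construction A lattice A_{2k}(C), i.e., the least value of <x,x> over nonzero x in A_{2k}(C), equals min(2k, d_E(C)/(2k)). -/

import Mathlib

/-- The signed representative map `ρ : ℤ/2kℤ → ℤ`. -/
def signedRep (k : ℕ) (a : ZMod (2 * k)) : ℤ :=
  if a.val ≤ k then (a.val : ℤ) else (a.val : ℤ) - 2 * k

/-- The Euclidean weight of a codeword over `ℤ/2kℤ`. -/
def euclWt (k n : ℕ) (c : Fin n → ZMod (2 * k)) : ℤ :=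
  ∑ i, min (((c i).val : ℤ) ^ 2) ((2 * (k : ℤ) - (c i).val) ^ 2)

/-- The Construction A lattice `A_{2k}(C) = (1/√(2k))(ρ(C) + 2kℤⁿ)`. -/
def constructionA (k n : ℕ) (C : Submodule (ZMod (2 * k)) (Fin n → ZMod (2 * k))) :
    Set (Fin n → ℝ) :=
  {v | ∃ c ∈ C, ∃ z : Fin n → ℤ,
    v = fun i => ((signedRep k (c i) : ℝ) + 2 * k * z i) / Real.sqrt (2 * k)}

lemma signedRep_sq (k : ℕ) (hk : 0 < k) (a : ZMod (2 * k)) :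
    (signedRep k a) ^ 2 = min (((a.val : ℤ)) ^ 2) ((2 * (k : ℤ) - a.val) ^ 2) := by
  haveI : NeZero (2 * k) := ⟨by omega⟩
  have hv : a.val < 2 * k := a.val_lt
  have hv' : ((a.val : ℤ)) < 2 * k := by exact_mod_cast hv
  have hv0 : (0:ℤ) ≤ (a.val : ℤ) := Int.natCast_nonneg _
  unfold signedRep
  split_ifs with h
  · have h' : ((a.val : ℤ)) ≤ k := by exact_mod_cast h
    rw [min_eq_left]; nlinarith
  · have h' : (k:ℤ) < (a.val : ℤ) := by exact_mod_cast Nat.lt_of_not_le h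
    rw [min_eq_right]
    · ring
    · nlinarith

lemma signedRep_bounds (k : ℕ) (hk : 0 < k) (a : ZMod (2 * k)) :
    -(k:ℤ) ≤ signedRep k a ∧ signedRep k a ≤ k := by
  haveI : NeZero (2 * k) := ⟨by omega⟩
  have hv : a.val < 2 * k := a.val_lt
  unfold signedRep
  split_ifs with h
  · exact ⟨le_trans (by omega) (Int.natCast_nonneg _), by exact_mod_cast h⟩
  · have h' : k < a.val := Nat.lt_of_not_le h
    constructor
    · have : (k:ℤ) < (a.val : ℤ) := by exact_mod_cast h'
      omega
    · have : ((a.val : ℤ)) < 2 * k := by exact_mod_cast hv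
      omega

lemma signedRep_ne_zero (k : ℕ) (hk : 0 < k) (a : ZMod (2 * k)) (ha : a ≠ 0) :
    signedRep k a ≠ 0 := by
  haveI : NeZero (2 * k) := ⟨by omega⟩
  have hv : a.val < 2 * k := a.val_lt
  have hv0 : a.val ≠ 0 := fun h => ha ((ZMod.val_eq_zero a).1 h)
  unfold signedRep
  split_ifs with h
  · exact_mod_cast hv0
  · have : ((a.val : ℤ)) < 2 * k := by exact_mod_cast hv
    omega

lemma sq_le_sq_add (k : ℕ) (hk : 0 < k) (a : ℤ) (h1 : -(k:ℤ) ≤ a) (h2 : a ≤ k) (z : ℤ) :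
    a ^ 2 ≤ (a + 2 * k * z) ^ 2 := by
  have hk' : (0:ℤ) ≤ k := Int.natCast_nonneg _
  have hz1 : z ≤ z ^ 2 := Int.le_self_sq z
  have hz2 : -z ≤ z ^ 2 := by nlinarith [Int.le_self_sq (-z)]
  nlinarith [mul_nonneg (mul_nonneg hk' (sub_nonneg.2 h2)) (sub_nonneg.2 hz1),
    mul_nonneg (mul_nonneg hk' (by linarith : (0:ℤ) ≤ (k:ℤ) + a)) (sub_nonneg.2 hz2)]

theorem constructionA_min_norm
    (k n : ℕ) (hk : 0 < k) (hn : 0 < n)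
    (C : Submodule (ZMod (2 * k)) (Fin n → ZMod (2 * k)))
    (hself : ∀ x : Fin n → ZMod (2 * k),
      x ∈ C ↔ ∀ y ∈ C, ∑ i, x i * y i = 0)
    (hC : C ≠ ⊥)
    (dE : ℤ)
    (hdE : IsLeast {w : ℤ | ∃ c ∈ C, c ≠ 0 ∧ w = euclWt k n c} dE) :
    IsLeast {r : ℝ | ∃ v ∈ constructionA k n C, v ≠ 0 ∧ r = ∑ i, v i * v i}
      (min (2 * (k : ℝ)) ((dE : ℝ) / (2 * k))) := by
  have hk2 : (0:ℝ) < 2 * k := by positivity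
  have hs : (0:ℝ) < Real.sqrt (2 * k) := Real.sqrt_pos.2 hk2
  have hss : Real.sqrt (2 * (k:ℝ)) * Real.sqrt (2 * (k:ℝ)) = 2 * k :=
    Real.mul_self_sqrt hk2.le
  -- general formula for the norm
  have hnorm : ∀ (c : Fin n → ZMod (2 * k)) (z : Fin n → ℤ),
      (∑ i, (((signedRep k (c i) : ℝ) + 2 * k * z i) / Real.sqrt (2 * k)) *
        (((signedRep k (c i) : ℝ) + 2 * k * z i) / Real.sqrt (2 * k)))
      = (∑ i, ((signedRep k (c i) : ℝ) + 2 * k * z i) ^ 2) / (2 * k) := by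
    intro c z
    rw [Finset.sum_div]
    refine Finset.sum_congr rfl fun i _ => ?_
    rw [div_mul_div_comm, hss]; ring_nf
  have hwt : ∀ c : Fin n → ZMod (2 * k),
      (∑ i, ((signedRep k (c i) : ℝ)) ^ 2) = ((euclWt k n c : ℤ) : ℝ) := by
    intro c
    unfold euclWt
    push_cast
    refine Finset.sum_congr rfl fun i _ => ?_
    exact_mod_cast signedRep_sq k hk (c i)
  haveI : NeZero (2 * k) := ⟨by omega⟩
  have h0 : signedRep k (0 : ZMod (2 * k)) = 0 := by
    unfold signedRep; simp [ZMod.val_zero]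
  constructor
  · -- membership
    rcases le_or_gt ((dE:ℝ)/(2*k)) (2*(k:ℝ)) with h | h
    · rw [min_eq_right h]
      obtain ⟨c, hcC, hc0, hcw⟩ := hdE.1
      refine ⟨fun i => ((signedRep k (c i) : ℝ) + 2*k*((0 : Fin n → ℤ) i)) / Real.sqrt (2*k),
        ⟨c, hcC, 0, rfl⟩, ?_, ?_⟩
      · obtain ⟨i, hi⟩ : ∃ i, c i ≠ 0 := by
          by_contra hcon; push_neg at hcon
          exact hc0 (funext hcon)
        intro hv
        have := congrFun hv i
        have hsr : (signedRep k (c i) : ℝ) ≠ 0 := by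
          exact_mod_cast signedRep_ne_zero k hk (c i) hi
        simp [div_eq_zero_iff, hs.ne', hsr] at this
        exact hk.ne' this
      · rw [hnorm c 0]
        simp only [Pi.zero_apply, Int.cast_zero, mul_zero, add_zero]
        rw [hwt, ← hcw]
    · rw [min_eq_left h.le]
      set z : Fin n → ℤ := fun i => if i = ⟨0, hn⟩ then 1 else 0 with hz
      refine ⟨fun i => ((signedRep k ((0 : Fin n → ZMod (2*k)) i) : ℝ) + 2*k*(z i)) /
          Real.sqrt (2*k), ⟨0, C.zero_mem, z, rfl⟩, ?_, ?_⟩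
      · intro hv
        have := congrFun hv ⟨0, hn⟩
        simp [hz, h0, div_eq_zero_iff, hs.ne', hk2.ne'] at this
        exact hk.ne' this
      · rw [hnorm 0 z]
        have : ∀ i : Fin n, ((signedRep k ((0 : Fin n → ZMod (2*k)) i) : ℝ) + 2*k*(z i))^2
            = if i = ⟨0, hn⟩ then (2*(k:ℝ))^2 else 0 := by
          intro i
          simp only [hz, Pi.zero_apply, h0, Int.cast_zero, zero_add]
          split_ifs <;> simp
        rw [Finset.sum_congr rfl fun i _ => this i, Finset.sum_ite_eq' Finset.univ]
        simp only [Finset.mem_univ, if_true]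
        field_simp
  · rintro r ⟨v, ⟨c, hcC, z, rfl⟩, hv0, rfl⟩
    rw [hnorm c z]
    by_cases hc : c = 0
    · subst hc
      obtain ⟨i, hi⟩ : ∃ i, z i ≠ 0 := by
        by_contra hcon; push_neg at hcon
        apply hv0; funext i
        simp [hcon i, h0]
      refine le_trans (min_le_left _ _) ?_
      rw [le_div_iff₀ hk2]
      have hterm : (2*(k:ℝ))^2 ≤ ∑ j, ((signedRep k ((0 : Fin n → ZMod (2*k)) j) : ℝ)
          + 2*k*(z j))^2 := by
        refine le_trans ?_ (Finset.single_le_sum (f := fun j =>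
          ((signedRep k ((0 : Fin n → ZMod (2*k)) j) : ℝ) + 2*k*(z j))^2)
          (fun j _ => sq_nonneg _) (Finset.mem_univ i))
        simp only [Pi.zero_apply, h0, Int.cast_zero, zero_add, mul_pow]
        have h1 : (1:ℝ) ≤ ((z i : ℤ) : ℝ)^2 := by
          have : (1:ℤ) ≤ (z i)^2 := by
            rcases lt_or_gt_of_ne hi with h' | h' <;> nlinarith
          exact_mod_cast this
        nlinarith [sq_nonneg (2*(k:ℝ))]
      nlinarith
    · refine le_trans (min_le_right _ _) ?_
      have hZ : euclWt k n c ≤ ∑ i, (signedRep k (c i) + 2*k*(z i))^2 := by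
        have he : euclWt k n c = ∑ i, (signedRep k (c i))^2 := by
          unfold euclWt
          exact (Finset.sum_congr rfl fun i _ => (signedRep_sq k hk (c i)).symm)
        rw [he]
        refine Finset.sum_le_sum fun i _ => ?_
        obtain ⟨hb1, hb2⟩ := signedRep_bounds k hk (c i)
        exact sq_le_sq_add k hk _ hb1 hb2 (z i)
      have hdc : dE ≤ euclWt k n c := hdE.2 ⟨c, hcC, hc, rfl⟩
      have hR : (dE:ℝ) ≤ ∑ i, ((signedRep k (c i) : ℝ) + 2*k*(z i))^2 := by
        have : ((∑ i, (signedRep k (c i) + 2*k*(z i))^2 : ℤ) : ℝ)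
            = ∑ i, ((signedRep k (c i) : ℝ) + 2*k*(z i))^2 := by
          push_cast
          exact Finset.sum_congr rfl fun i _ => by ring
        rw [← this]
        exact_mod_cast le_trans hdc hZ
      gcongr
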